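/- arXiv:2305.03100 — 4 statements merged into one kernel-verified Lean document; each statement's English description precedes it below -/
import Mathlib

section
/- Orthogonality of synergy projections: if Φ_T is a pure interaction function of T (i.e., Φ_T(x) = 0 whenever x_i = x'_i for some i ∈ T, and Φ_T depends only on coordinates in T), then φ_S(Φ_T) = 0 whenever S ≠ T. -/
open Finset

/-- `splice x x' T` agrees with `x` on coordinates in `T` and with the baseline `x'` elsewhere. -/
def splice {n : ℕ} (x x' : Fin n → ℝ) (T : Finset (Fin n)) : Fin n → ℝ :=
  fun i => if i ∈ T then x i else x' i

/-- The synergy function `φ_S(F)(x)` with baseline `x'`. -/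
noncomputable def synergy {n : ℕ} (x' : Fin n → ℝ) (S : Finset (Fin n))
    (F : (Fin n → ℝ) → ℝ) (x : Fin n → ℝ) : ℝ :=
  ∑ T ∈ S.powerset, (-1 : ℝ) ^ (S.card - T.card) * F (splice x x' T)


/-- `Φ` is a pure interaction function of the group `T` (with baseline `x'`):
it vanishes whenever some coordinate in `T` is at the baseline, and it does not
depend on coordinates outside `T`. -/
def PureInteraction {n : ℕ} (x' : Fin n → ℝ) (T : Finset (Fin n))
    (Φ : (Fin n → ℝ) → ℝ) : Prop :=
  (∀ x : Fin n → ℝ, (∃ i ∈ T, x i = x' i) → Φ x = 0) ∧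
  (∀ y z : Fin n → ℝ, (∀ i ∈ T, y i = z i) → Φ y = Φ z)

theorem synergy_orthogonal {n : ℕ} (x' : Fin n → ℝ) (S T : Finset (Fin n))
    (Φ : (Fin n → ℝ) → ℝ) (hΦ : PureInteraction x' T Φ) (hST : S ≠ T) :
    ∀ x, synergy x' S Φ x = 0 := by
  intro x
  unfold synergy
  by_cases hTS : T ⊆ S
  · -- there is j ∈ S \ T; pair W with W with j toggled
    have hSne : ¬ S ⊆ T := fun h => hST (Finset.Subset.antisymm h hTS)
    obtain ⟨j, hjS, hjT⟩ := Finset.not_subset.mp hSne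
    apply Finset.sum_involution
      (g := fun (W : Finset (Fin n)) _ => if j ∈ W then W.erase j else insert j W)
    · intro W hW
      simp only [Finset.mem_powerset] at hW
      -- Φ values agree
      have hval : ∀ W' : Finset (Fin n),
          Φ (splice x x' (if j ∈ W then W.erase j else insert j W))
            = Φ (splice x x' W) := by
        intro _
        apply hΦ.2
        intro i hi
        have hij : i ≠ j := fun h => hjT (h ▸ hi)
        by_cases hjW : j ∈ W <;> simp [splice, hjW, hij, Finset.mem_erase, Finset.mem_insert]
      by_cases hjW : j ∈ W
      · have h1 : (1 : ℕ) ≤ W.card := Finset.card_pos.mpr ⟨j, hjW⟩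
        have h2 : W.card ≤ S.card := Finset.card_le_card hW
        have hc : (W.erase j).card = W.card - 1 := Finset.card_erase_of_mem hjW
        have he : S.card - (W.erase j).card = (S.card - W.card) + 1 := by
          rw [hc]; omega
        rw [hval W, if_pos hjW, he, pow_succ]
        ring
      · have hWS : insert j W ⊆ S := Finset.insert_subset hjS hW
        have hc : (insert j W).card = W.card + 1 := Finset.card_insert_of_notMem hjW
        have h2 : W.card + 1 ≤ S.card := hc ▸ Finset.card_le_card hWS
        have he : S.card - W.card = (S.card - (insert j W).card) + 1 := by
          rw [hc]; omega
        rw [hval W, if_neg hjW, he, pow_succ]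
        ring
    · intro W hW h
      by_cases hjW : j ∈ W
      · simp only [if_pos hjW]
        intro hEq
        exact absurd (hEq ▸ Finset.notMem_erase j W) (by simpa using hjW)
      · simp only [if_neg hjW]
        intro hEq
        exact hjW (hEq ▸ Finset.mem_insert_self j W)
    · intro W hW
      simp only [Finset.mem_powerset] at hW ⊢
      by_cases hjW : j ∈ W
      · simp only [if_pos hjW]
        exact (Finset.erase_subset j W).trans hW
      · simp only [if_neg hjW]
        exact Finset.insert_subset hjS hW
    · intro W hW
      by_cases hjW : j ∈ W
      · simp [hjW, Finset.insert_erase hjW]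
      · simp [hjW]
  · -- some i ∈ T, i ∉ S: every term vanishes
    obtain ⟨i, hiT, hiS⟩ := Finset.not_subset.mp hTS
    apply Finset.sum_eq_zero
    intro W hW
    have hiW : i ∉ W := fun h => hiS (Finset.mem_powerset.mp hW h)
    have : Φ (splice x x' W) = 0 := by
      apply hΦ.1
      exact ⟨i, hiT, by simp [splice, hiW]⟩
    rw [this, mul_zero]
end

section
/- Uniqueness of synergy decomposition: if F = \sum_{S ∈ P1} Φ^1_S = \sum_{S ∈ P2} Φ^2_S are two decompositions of F into nonzero pure interaction functions on distinct groups (with P1, P2 ⊆ powerset of N), then apart from possible zero constant terms indexed by ∅, P1 = P2 and Φ^1_S = Φ^2_S for all S. -/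
open Finset

lemma sign_split {m k : ℕ} (hk : k ≤ m) : ((-1:ℝ))^(m-k) = (-1)^m * (-1)^k := by
  have h : ((-1:ℝ))^(m-k) * (-1)^k = (-1)^m := by
    rw [← pow_add, Nat.sub_add_cancel hk]
  have h2 : ((-1:ℝ))^k * (-1)^k = 1 := by
    rw [← pow_add]; exact Even.neg_one_pow ⟨k, rfl⟩
  calc ((-1:ℝ))^(m-k) = (-1)^(m-k) * ((-1)^k * (-1)^k) := by rw [h2, mul_one]
    _ = ((-1)^(m-k) * (-1)^k) * (-1)^k := by ring
    _ = (-1)^m * (-1)^k := by rw [h]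

lemma neg_one_powerset_sum {n : ℕ} (A : Finset (Fin n)) :
    ∑ V ∈ A.powerset, ((-1:ℝ))^(A.card - V.card) = if A = ∅ then 1 else 0 := by
  have : ∀ V ∈ A.powerset, ((-1:ℝ))^(A.card - V.card) = (-1)^A.card * (-1)^V.card := by
    intro V hV
    exact sign_split (Finset.card_le_card (Finset.mem_powerset.1 hV))
  rw [Finset.sum_congr rfl this, ← Finset.mul_sum]
  have hz : ∑ V ∈ A.powerset, ((-1:ℝ))^V.card = if A = ∅ then 1 else 0 := by
    have := @Finset.sum_powerset_neg_one_pow_card (Fin n) _ A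
    have hcast := congrArg (fun z : ℤ => (z : ℝ)) this
    push_cast at hcast
    convert hcast using 2 <;> simp
  rw [hz]
  by_cases h : A = ∅
  · simp [h]
  · simp [h]

lemma alt_sum {n : ℕ} (T S : Finset (Fin n)) :
    ∑ U ∈ S.powerset, (if T ⊆ U then ((-1:ℝ))^(S.card - U.card) else 0)
      = if S = T then 1 else 0 := by
  by_cases hTS : T ⊆ S
  · rw [← Finset.sum_filter]
    have hbij : ∑ U ∈ S.powerset.filter (fun U => T ⊆ U), ((-1:ℝ))^(S.card - U.card)
        = ∑ V ∈ (S \ T).powerset, ((-1:ℝ))^((S \ T).card - V.card) := by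
      apply Finset.sum_bij' (fun U _ => U \ T) (fun V _ => T ∪ V)
      · intro U hU
        simp only [Finset.mem_filter, Finset.mem_powerset] at hU
        exact Finset.mem_powerset.2 (Finset.sdiff_subset_sdiff hU.1 le_rfl)
      · intro V hV
        simp only [Finset.mem_powerset] at hV
        simp only [Finset.mem_filter, Finset.mem_powerset]
        constructor
        · exact Finset.union_subset hTS (hV.trans (Finset.sdiff_subset))
        · exact Finset.subset_union_left
      · intro U hU
        simp only [Finset.mem_filter, Finset.mem_powerset] at hU
        exact Finset.union_sdiff_of_subset hU.2
      · intro V hV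
        simp only [Finset.mem_powerset] at hV
        exact Finset.union_sdiff_cancel_left
          (Finset.disjoint_of_subset_right hV (Finset.disjoint_sdiff))
      · intro U hU
        simp only [Finset.mem_filter, Finset.mem_powerset] at hU
        congr 1
        have h1 : (S \ T).card = S.card - T.card := Finset.card_sdiff_of_subset hTS
        have h2 : (U \ T).card = U.card - T.card := Finset.card_sdiff_of_subset hU.2
        have h3 : T.card ≤ U.card := Finset.card_le_card hU.2
        have h4 : U.card ≤ S.card := Finset.card_le_card hU.1
        omega
    rw [hbij, neg_one_powerset_sum]
    have : (S \ T = ∅) ↔ (S = T) := by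
      constructor
      · intro h
        exact Finset.Subset.antisymm (by rwa [← Finset.sdiff_eq_empty_iff_subset]) hTS
      · intro h; simp [h]
    simp only [this]
  · have hall : ∀ U ∈ S.powerset, (if T ⊆ U then ((-1:ℝ))^(S.card - U.card) else 0) = 0 := by
      intro U hU
      rw [if_neg]
      intro hTU
      exact hTS (hTU.trans (Finset.mem_powerset.1 hU))
    rw [Finset.sum_congr rfl hall, Finset.sum_const, smul_zero]
    rw [if_neg]
    intro h
    exact hTS (h ▸ le_rfl)

lemma synergy_pure {n : ℕ} (x' : Fin n → ℝ) (T S : Finset (Fin n))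
    (Φ : (Fin n → ℝ) → ℝ) (h : PureInteraction x' T Φ) (x : Fin n → ℝ) :
    synergy x' S Φ x = if S = T then Φ x else 0 := by
  unfold synergy
  have hval : ∀ U ∈ S.powerset, (-1:ℝ)^(S.card - U.card) * Φ (splice x x' U)
      = Φ x * (if T ⊆ U then (-1:ℝ)^(S.card - U.card) else 0) := by
    intro U _
    by_cases hTU : T ⊆ U
    · have : Φ (splice x x' U) = Φ x := by
        apply h.2
        intro i hi
        simp [splice, hTU hi]
      rw [this, if_pos hTU]; ring
    · obtain ⟨i, hi, hiU⟩ := Finset.not_subset.1 hTU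
      have : Φ (splice x x' U) = 0 := by
        apply h.1
        exact ⟨i, hi, by simp [splice, hiU]⟩
      rw [this, if_neg hTU]; ring
  rw [Finset.sum_congr rfl hval, ← Finset.mul_sum, alt_sum]
  by_cases hST : S = T <;> simp [hST]

lemma synergy_decomp {n : ℕ} (x' : Fin n → ℝ) (F : (Fin n → ℝ) → ℝ)
    (P : Finset (Finset (Fin n))) (Φ : Finset (Fin n) → (Fin n → ℝ) → ℝ)
    (h : ∀ S ∈ P, PureInteraction x' S (Φ S))
    (hF : ∀ x, F x = ∑ S ∈ P, Φ S x) (S : Finset (Fin n)) (x : Fin n → ℝ) :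
    synergy x' S F x = if S ∈ P then Φ S x else 0 := by
  have h1 : synergy x' S F x = ∑ T ∈ P, synergy x' S (Φ T) x := by
    unfold synergy
    simp only [hF, Finset.mul_sum]
    exact Finset.sum_comm
  rw [h1]
  have h2 : ∀ T ∈ P, synergy x' S (Φ T) x = if S = T then Φ T x else 0 := by
    intro T hT
    exact synergy_pure x' T S (Φ T) (h T hT) x
  rw [Finset.sum_congr rfl h2, Finset.sum_ite_eq]

theorem synergy_decomposition_unique {n : ℕ} (x' : Fin n → ℝ) (F : (Fin n → ℝ) → ℝ)
    (P1 P2 : Finset (Finset (Fin n)))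
    (Φ1 Φ2 : Finset (Fin n) → (Fin n → ℝ) → ℝ)
    (h1 : ∀ S ∈ P1, PureInteraction x' S (Φ1 S) ∧ ∃ x, Φ1 S x ≠ 0)
    (h2 : ∀ S ∈ P2, PureInteraction x' S (Φ2 S) ∧ ∃ x, Φ2 S x ≠ 0)
    (hF1 : ∀ x, F x = ∑ S ∈ P1, Φ1 S x)
    (hF2 : ∀ x, F x = ∑ S ∈ P2, Φ2 S x) :
    P1 \ {∅} = P2 \ {∅} ∧ ∀ S ∈ P1, S ≠ ∅ → Φ1 S = Φ2 S := by
  have key : ∀ S x, (if S ∈ P1 then Φ1 S x else 0) = (if S ∈ P2 then Φ2 S x else 0) := by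
    intro S x
    rw [← synergy_decomp x' F P1 Φ1 (fun S hS => (h1 S hS).1) hF1 S x,
        ← synergy_decomp x' F P2 Φ2 (fun S hS => (h2 S hS).1) hF2 S x]
  have hmem : ∀ S, S ∈ P1 ↔ S ∈ P2 := by
    intro S
    constructor
    · intro hS
      by_contra hS2
      obtain ⟨x, hx⟩ := (h1 S hS).2
      have := key S x
      rw [if_pos hS, if_neg hS2] at this
      exact hx this
    · intro hS
      by_contra hS2
      obtain ⟨x, hx⟩ := (h2 S hS).2
      have := key S x
      rw [if_neg hS2, if_pos hS] at this
      exact hx this.symm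
  constructor
  · ext S
    simp [hmem S]
  · intro S hS _
    funext x
    have := key S x
    rwa [if_pos hS, if_pos ((hmem S).1 hS)] at this
end

section
/- Integrated Gradients on a centered monomial: for x' = 0, m ∈ ℕ^n with m_i > 0, and F(y) = y^m = \prod_j y_j^{m_j}, the Integrated Gradient IG_i(x,F) = x_i ∫_0^1 (∂F/∂x_i)(t x) dt equals (m_i / ‖m‖_1) x^m, where ‖m‖_1 = \sum_j m_j. -/
open Finset

/-- Integrated Gradients of feature `i` with baseline `0`:
`IG_i(x,F) = x_i ∫_0^1 (∂F/∂x_i)(t • x) dt`, where the partial derivative in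
coordinate `i` is expressed as the derivative in the `i`-th slot. -/
noncomputable def ig {n : ℕ} (F : (Fin n → ℝ) → ℝ) (i : Fin n) (x : Fin n → ℝ) : ℝ :=
  x i * ∫ t in (0:ℝ)..1, deriv (fun s : ℝ => F (Function.update (t • x) i s)) ((t • x) i)

theorem ig_monomial {n : ℕ} (m : Fin n → ℕ) (i : Fin n) (hmi : 0 < m i) (x : Fin n → ℝ) :
    ig (fun y => ∏ j, y j ^ m j) i x
      = ((m i : ℝ) / (∑ j, (m j : ℝ))) * ∏ j, x j ^ m j := by
  unfold ig
  set S : ℕ := ∑ j ∈ univ.erase i, m j with hS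
  set P : ℝ := ∏ j ∈ univ.erase i, x j ^ m j with hP
  have hderiv : ∀ t : ℝ,
      deriv (fun s : ℝ => ∏ j, Function.update (t • x) i s j ^ m j) ((t • x) i)
        = (m i : ℝ) * (x i ^ (m i - 1) * P) * t ^ (m i - 1 + S) := by
    intro t
    have h1 : (fun s : ℝ => ∏ j, Function.update (t • x) i s j ^ m j)
        = fun s : ℝ => s ^ m i * ∏ j ∈ univ.erase i, ((t • x) j) ^ m j := by
      funext s
      rw [← Finset.mul_prod_erase univ _ (Finset.mem_univ i)]
      simp only [Function.update_self]
      congr 1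
      exact Finset.prod_congr rfl fun j hj => by
        rw [Function.update_of_ne (Finset.ne_of_mem_erase hj)]
    rw [h1, deriv_mul_const, deriv_pow_field]
    · simp only [Pi.smul_apply, smul_eq_mul, mul_pow, Finset.prod_mul_distrib,
        Finset.prod_pow_eq_pow_sum, ← hS, ← hP]
      ring
    · exact differentiableAt_pow _
  simp only [hderiv]
  rw [intervalIntegral.integral_const_mul, integral_pow]
  have hsum : m i + S = ∑ j, m j := Finset.add_sum_erase univ m (Finset.mem_univ i)
  have hk : m i - 1 + S + 1 = ∑ j, m j := by omega
  have hx : x i * x i ^ (m i - 1) = x i ^ m i := by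
    rw [← pow_succ']
    congr 1
    omega
  have hprod : (∏ j, x j ^ m j) = x i ^ m i * P :=
    (Finset.mul_prod_erase univ _ (Finset.mem_univ i)).symm
  have hcast : ((∑ j, (m j : ℝ))) = ((m i - 1 + S + 1 : ℕ) : ℝ) := by
    rw [hk]; push_cast; ring
  rw [hprod, hcast, ← hx]
  push_cast
  ring
end

section
/- Uniqueness of the full-order interaction: any map I assigning to each function F : ℝ^n → ℝ (with fixed x, x' ∈ ℝ^n) a vector (I_S(F))_{S ⊆ N} satisfying (1) completeness: \sum_{S ≠ ∅} I_S(F) = F(x) − F(x'); (2) null feature: I_S(F) = 0 whenever F does not depend on some coordinate i ∈ S; (3) linearity of zero-valued functions: I_S(G) = 0 implies I_S(F + G) = I_S(F); and (4) baseline test: I_S(F) = 0 whenever y ↦ F(y_S) is constant — must equal the synergy function, i.e., I_S(F) = \sum_{T ⊆ S} (-1)^{|S|-|T|} F(x_T) for all nonempty S. -/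
open Finset

lemma splice_splice {n : ℕ} (y x' : Fin n → ℝ) (W V : Finset (Fin n)) :
    splice (splice y x' W) x' V = splice y x' (V ∩ W) := by
  funext i
  simp only [splice, mem_inter]
  by_cases h1 : i ∈ V <;> by_cases h2 : i ∈ W <;> simp [h1, h2]

lemma splice_empty {n : ℕ} (y x' : Fin n → ℝ) : splice y x' ∅ = x' := by
  funext i; simp [splice]

lemma splice_congr {n : ℕ} {y z x' : Fin n → ℝ} {V : Finset (Fin n)} {i : Fin n}
    (hiV : i ∉ V) (hyz : ∀ j, j ≠ i → y j = z j) :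
    splice y x' V = splice z x' V := by
  funext j
  simp only [splice]
  by_cases hj : j ∈ V
  · simp only [hj, if_true]
    exact hyz j (fun h => hiV (h ▸ hj))
  · simp [hj]

/-- The synergy vanishes on any splice point `splice y x' W` with `W ∩ S ≠ S`. -/
lemma synergy_splice_eq_zero {n : ℕ} (x' y : Fin n → ℝ) (S W : Finset (Fin n))
    (F : (Fin n → ℝ) → ℝ) (hW : W ∩ S ≠ S) :
    synergy x' S F (splice y x' W) = 0 := by
  classical
  obtain ⟨i, hiS, hiW⟩ : ∃ i ∈ S, i ∉ W := by
    by_contra h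
    push_neg at h
    exact hW (Finset.inter_eq_right.2 h)
  have hKval : synergy x' S F (splice y x' W)
      = ∑ V ∈ S.powerset, (-1 : ℝ) ^ (S.card - V.card) * F (splice y x' (V ∩ W)) := by
    rw [synergy]
    exact Finset.sum_congr rfl fun V _ => by rw [splice_splice]
  rw [hKval]
  apply Finset.sum_involution (g := fun V _ => if i ∈ V then V.erase i else insert i V)
  · -- pairs cancel
    intro V hV
    have hVS : V ⊆ S := mem_powerset.1 hV
    have hcard : V.card ≤ S.card := card_le_card hVS
    by_cases hiV : i ∈ V
    · simp only [hiV, if_true]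
      have hinter : V.erase i ∩ W = V ∩ W := by
        ext j
        simp only [mem_inter, mem_erase]
        constructor
        · rintro ⟨⟨-, hj⟩, hjW⟩; exact ⟨hj, hjW⟩
        · rintro ⟨hjV, hjW⟩
          exact ⟨⟨fun h => hiW (h ▸ hjW), hjV⟩, hjW⟩
      have hc1 : 1 ≤ V.card := Finset.card_pos.2 ⟨i, hiV⟩
      have hce : (V.erase i).card = V.card - 1 := card_erase_of_mem hiV
      have hexp : S.card - (V.erase i).card = (S.card - V.card) + 1 := by omega
      rw [hinter, hexp, pow_succ]
      ring
    · simp only [hiV, if_false]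
      have hinter : insert i V ∩ W = V ∩ W := by
        ext j
        simp only [mem_inter, mem_insert]
        constructor
        · rintro ⟨hj, hjW⟩
          rcases hj with rfl | hj
          · exact absurd hjW hiW
          · exact ⟨hj, hjW⟩
        · rintro ⟨hjV, hjW⟩; exact ⟨Or.inr hjV, hjW⟩
      have hlt : V.card < S.card := card_lt_card ⟨hVS, fun h => hiV (h hiS)⟩
      have hci : (insert i V).card = V.card + 1 := card_insert_of_notMem hiV
      have hexp : S.card - V.card = (S.card - (insert i V).card) + 1 := by omega
      rw [hinter, hexp, pow_succ]
      ring
  · -- the involution has no fixed points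
    intro V hV hf0
    by_cases hiV : i ∈ V
    · simp only [hiV, if_true]
      intro h
      have := Finset.notMem_erase i V
      rw [h] at this
      exact this hiV
    · simp only [hiV, if_false]
      intro h
      have := Finset.mem_insert_self i V
      rw [h] at this
      exact hiV this
  · -- the involution is involutive
    intro V hV
    by_cases hiV : i ∈ V
    · simp only [hiV, if_true]
      rw [if_neg (Finset.notMem_erase i V)]
      exact insert_erase hiV
    · simp only [hiV, if_false]
      rw [if_pos (Finset.mem_insert_self i V)]
      exact erase_insert hiV
  · -- the involution maps the powerset into itself
    intro V hV
    have hVS : V ⊆ S := mem_powerset.1 hV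
    by_cases hiV : i ∈ V
    · simp only [hiV, if_true]
      exact mem_powerset.2 ((erase_subset i V).trans hVS)
    · simp only [hiV, if_false]
      exact mem_powerset.2 (insert_subset hiS hVS)

theorem full_order_interaction_unique {n : ℕ} (x x' : Fin n → ℝ)
    (I : ((Fin n → ℝ) → ℝ) → Finset (Fin n) → ℝ)
    (hcomplete : ∀ F : (Fin n → ℝ) → ℝ,
      ∑ S ∈ (Finset.univ : Finset (Fin n)).powerset.filter (fun S => S ≠ ∅), I F S
        = F x - F x')
    (hnull : ∀ (F : (Fin n → ℝ) → ℝ) (S : Finset (Fin n)) (i : Fin n), i ∈ S →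
      (∀ y z : Fin n → ℝ, (∀ j, j ≠ i → y j = z j) → F y = F z) → I F S = 0)
    (hlinzero : ∀ (F G : (Fin n → ℝ) → ℝ) (S : Finset (Fin n)),
      I G S = 0 → I (fun y => F y + G y) S = I F S)
    (hbaseline : ∀ (F : (Fin n → ℝ) → ℝ) (S : Finset (Fin n)),
      (∀ y z : Fin n → ℝ, F (splice y x' S) = F (splice z x' S)) → I F S = 0) :
    ∀ (F : (Fin n → ℝ) → ℝ) (S : Finset (Fin n)), S ≠ ∅ →
      I F S = synergy x' S F x := by
  intro F S hS
  classical
  have hzero_add : ∀ G G' : (Fin n → ℝ) → ℝ, I G S = 0 → I G' S = 0 →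
      I (fun y => G y + G' y) S = 0 := by
    intro G G' h h'
    rw [hlinzero G G' S h', h]
  have hIzero_sum : ∀ (A : Finset (Finset (Fin n))) (f : Finset (Fin n) → (Fin n → ℝ) → ℝ),
      (∀ T ∈ A, I (f T) S = 0) → I (fun y => ∑ T ∈ A, f T y) S = 0 := by
    intro A
    induction A using Finset.induction_on with
    | empty =>
      intro f _
      have h0 : I (fun _ => (0 : ℝ)) S = 0 := hbaseline _ S (fun y z => rfl)
      simpa using h0
    | @insert a s ha ih =>
      intro f hf
      have h1 : I (f a) S = 0 := hf a (mem_insert_self a s)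
      have h2 : I (fun y => ∑ T ∈ s, f T y) S = 0 :=
        ih f fun T hT => hf T (mem_insert_of_mem hT)
      have h3 := hzero_add (f a) (fun y => ∑ T ∈ s, f T y) h1 h2
      simpa [Finset.sum_insert ha] using h3
  -- Step A : I F S = I H S where H y = F (splice y x' S)
  have stepA : I F S = I (fun y => F (splice y x' S)) S := by
    have h0 : I (fun y => F y - F (splice y x' S)) S = 0 := by
      apply hbaseline
      intro y z
      show F (splice y x' S) - F (splice (splice y x' S) x' S)
          = F (splice z x' S) - F (splice (splice z x' S) x' S)
      rw [splice_splice, splice_splice, inter_self]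
      ring
    have h1 := hlinzero (fun y => F (splice y x' S))
      (fun y => F y - F (splice y x' S)) S h0
    have h2 : (fun y => F (splice y x' S) + (F y - F (splice y x' S))) = F := by
      funext y; ring
    rw [h2] at h1
    exact h1
  -- Step B : I H S = I (synergy x' S F) S
  have stepB : I (fun y => F (splice y x' S)) S = I (synergy x' S F) S := by
    have hIR : I (fun y => ∑ V ∈ S.powerset.erase S,
        (-((-1 : ℝ) ^ (S.card - V.card))) * F (splice y x' V)) S = 0 := by
      apply hIzero_sum
      intro V hV
      obtain ⟨hVne, hVp⟩ := mem_erase.1 hV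
      have hVS : V ⊆ S := mem_powerset.1 hVp
      obtain ⟨i, hiS, hiV⟩ :=
        Finset.exists_of_ssubset ⟨hVS, fun h => hVne (Subset.antisymm hVS h)⟩
      exact hnull _ S i hiS fun y z hyz => by rw [splice_congr hiV hyz]
    have h1 := hlinzero (synergy x' S F) (fun y => ∑ V ∈ S.powerset.erase S,
        (-((-1 : ℝ) ^ (S.card - V.card))) * F (splice y x' V)) S hIR
    have hKR : (fun y => synergy x' S F y + ∑ V ∈ S.powerset.erase S,
        (-((-1 : ℝ) ^ (S.card - V.card))) * F (splice y x' V))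
        = fun y => F (splice y x' S) := by
      funext y
      have e1 := Finset.sum_erase_add S.powerset
        (fun V => (-1 : ℝ) ^ (S.card - V.card) * F (splice y x' V)) (mem_powerset_self S)
      simp only [Nat.sub_self, pow_zero, one_mul] at e1
      have e2 : (∑ V ∈ S.powerset.erase S, (-1 : ℝ) ^ (S.card - V.card) * F (splice y x' V))
          + (∑ V ∈ S.powerset.erase S,
              (-((-1 : ℝ) ^ (S.card - V.card))) * F (splice y x' V)) = 0 := by
        rw [← Finset.sum_add_distrib]
        exact Finset.sum_eq_zero fun V _ => by ring
      show (∑ V ∈ S.powerset, (-1 : ℝ) ^ (S.card - V.card) * F (splice y x' V))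
          + (∑ V ∈ S.powerset.erase S,
              (-((-1 : ℝ) ^ (S.card - V.card))) * F (splice y x' V)) = F (splice y x' S)
      rw [← e1]
      linarith [e2]
    rw [hKR] at h1
    exact h1
  -- Step C : I (synergy x' S F) S = synergy x' S F x, via completeness
  have stepC : I (synergy x' S F) S = synergy x' S F x := by
    have hcK := hcomplete (synergy x' S F)
    have hKx' : synergy x' S F x' = 0 := by
      have := synergy_splice_eq_zero x' x S ∅ F (by simp [Ne.symm hS])
      rwa [splice_empty] at this
    have hsum : ∑ T ∈ (Finset.univ : Finset (Fin n)).powerset.filter (fun T => T ≠ ∅),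
        I (synergy x' S F) T = I (synergy x' S F) S := by
      apply Finset.sum_eq_single_of_mem
      · simp only [mem_filter, mem_powerset]
        exact ⟨subset_univ S, hS⟩
      · intro b hb hbS
        obtain ⟨-, hbne⟩ := mem_filter.1 hb
        by_cases hbsub : b ⊆ S
        · -- b ⊊ S : baseline axiom applies
          apply hbaseline
          intro y z
          have hb' : b ∩ S ≠ S := by rw [Finset.inter_eq_left.2 hbsub]; exact hbS
          rw [synergy_splice_eq_zero x' y S b F hb', synergy_splice_eq_zero x' z S b F hb']
        · -- some i ∈ b \ S : null axiom applies
          obtain ⟨i, hib, hiS⟩ : ∃ i ∈ b, i ∉ S := by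
            by_contra h
            push_neg at h
            exact hbsub h
          apply hnull _ b i hib
          intro y z hyz
          rw [synergy, synergy]
          apply Finset.sum_congr rfl
          intro V hV
          have hVS : V ⊆ S := mem_powerset.1 hV
          rw [splice_congr (fun h => hiS (hVS h)) hyz]
    rw [hsum, hKx', sub_zero] at hcK
    exact hcK
  rw [stepA, stepB, stepC]
end
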